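/- Define for x, y in a set and t ∈ ℝ the inf-convolution Φ_{x,y}(t) = inf{ Σ_{i=1}^ℓ |t_i|^{p_i} / d(x,y)^{s_i p_i} : t₁ + ⋯ + t_ℓ = t }. If p₁,…,p_ℓ ≥ 1, then Φ_{x,y} is convex on ℝ and satisfies min_{1≤i≤ℓ} |t|^{p_i}/(ℓ^{p_i} d(x,y)^{s_i p_i}) ≤ Φ_{x,y}(t) ≤ min_{1≤i≤ℓ} |t|^{p_i}/d(x,y)^{s_i p_i} for all t ∈ ℝ. -/
import Mathlib

private lemma abs_combo_rpow {q : ℝ} (hq : 1 ≤ q) {a b : ℝ} (x y : ℝ)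
    (ha : 0 ≤ a) (hb : 0 ≤ b) (hab : a + b = 1) :
    |a * x + b * y| ^ q ≤ a * |x| ^ q + b * |y| ^ q := by
  have h1 : |a * x + b * y| ≤ a * |x| + b * |y| := by
    calc |a * x + b * y| ≤ |a * x| + |b * y| := abs_add_le _ _
    _ = a * |x| + b * |y| := by rw [abs_mul, abs_mul, abs_of_nonneg ha, abs_of_nonneg hb]
  have h2 : |a * x + b * y| ^ q ≤ (a * |x| + b * |y|) ^ q :=
    Real.rpow_le_rpow (abs_nonneg _) h1 (le_trans zero_le_one hq)
  refine h2.trans ?_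
  have := (convexOn_rpow hq).2 (Set.mem_Ici.2 (abs_nonneg x)) (Set.mem_Ici.2 (abs_nonneg y))
    ha hb hab
  simpa using this

theorem stmt_18 (ℓ : ℕ) (hℓ : 1 ≤ ℓ)
    (s p : Fin ℓ → ℝ) (hs : ∀ i, s i ∈ Set.Ioo (0:ℝ) 1) (hp : ∀ i, 1 ≤ p i)
    (d : ℝ) (hd : 0 < d)
    (Φ : ℝ → ℝ)
    (hΦ : ∀ t, Φ t = sInf { v : ℝ | ∃ w : Fin ℓ → ℝ,
        (∑ i, w i) = t ∧ v = ∑ i, |w i| ^ p i / d ^ (s i * p i) }) :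
    ConvexOn ℝ Set.univ Φ ∧
    ∀ t : ℝ,
      (⨅ i, |t| ^ p i / ((ℓ : ℝ) ^ p i * d ^ (s i * p i))) ≤ Φ t ∧
      Φ t ≤ ⨅ i, |t| ^ p i / d ^ (s i * p i) := by
  have hℓ0 : 0 < ℓ := hℓ
  haveI : Nonempty (Fin ℓ) := ⟨⟨0, hℓ0⟩⟩
  set S : ℝ → Set ℝ := fun t => { v : ℝ | ∃ w : Fin ℓ → ℝ,
      (∑ i, w i) = t ∧ v = ∑ i, |w i| ^ p i / d ^ (s i * p i) } with hS
  have hD : ∀ i, 0 < d ^ (s i * p i) := fun i => Real.rpow_pos_of_pos hd _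
  have hfnn : ∀ (i : Fin ℓ) (w : ℝ), 0 ≤ |w| ^ p i / d ^ (s i * p i) := fun i w =>
    div_nonneg (Real.rpow_nonneg (abs_nonneg _) _) (hD i).le
  have hpi0 : ∀ i, (0:ℝ) ≤ p i := fun i => le_trans zero_le_one (hp i)
  -- a canonical decomposition putting everything on one coordinate
  have hsingle : ∀ (t : ℝ) (i : Fin ℓ),
      (∑ j, |((fun j => if j = i then t else 0) : Fin ℓ → ℝ) j| ^ p j / d ^ (s j * p j))
        = |t| ^ p i / d ^ (s i * p i) := by
    intro t i
    refine Finset.sum_eq_single_of_mem i (Finset.mem_univ i) ?_ |>.trans (by simp)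
    intro j _ hj
    simp [hj, Real.zero_rpow (by linarith [hp j] : p j ≠ 0)]
  have hmemS : ∀ (t : ℝ) (i : Fin ℓ), |t| ^ p i / d ^ (s i * p i) ∈ S t := by
    intro t i
    exact ⟨fun j => if j = i then t else 0, by simp, (hsingle t i).symm⟩
  have hne : ∀ t, (S t).Nonempty := fun t => ⟨_, hmemS t ⟨0, hℓ0⟩⟩
  have hbdd : ∀ t, BddBelow (S t) := by
    rintro t
    refine ⟨0, ?_⟩
    rintro v ⟨w, -, rfl⟩
    exact Finset.sum_nonneg fun i _ => hfnn i (w i)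
  have hkey : ∀ (a b x y : ℝ), 0 ≤ a → 0 ≤ b → a + b = 1 →
      ∀ v ∈ S x, ∀ u ∈ S y, Φ (a * x + b * y) ≤ a * v + b * u := by
    rintro a b x y ha hb hab v ⟨w, hw, rfl⟩ u ⟨z, hz, rfl⟩
    rw [hΦ]
    refine le_trans (csInf_le (hbdd _) ⟨fun i => a * w i + b * z i, ?_, rfl⟩) ?_
    · rw [Finset.sum_add_distrib, ← Finset.mul_sum, ← Finset.mul_sum, hw, hz]
    · rw [Finset.mul_sum, Finset.mul_sum, ← Finset.sum_add_distrib]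
      refine Finset.sum_le_sum fun i _ => ?_
      have h := abs_combo_rpow (hp i) (w i) (z i) ha hb hab
      show |a * w i + b * z i| ^ p i / d ^ (s i * p i) ≤ _
      calc |a * w i + b * z i| ^ p i / d ^ (s i * p i)
          ≤ (a * |w i| ^ p i + b * |z i| ^ p i) / d ^ (s i * p i) :=
            (div_le_div_iff_of_pos_right (hD i)).2 h
        _ = a * (|w i| ^ p i / d ^ (s i * p i)) + b * (|z i| ^ p i / d ^ (s i * p i)) := by
            ring
  constructor
  · refine ⟨convex_univ, ?_⟩
    rintro x - y - a b ha hb hab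
    simp only [smul_eq_mul]
    -- first: for fixed v ∈ S x, Φ(a x + b y) ≤ a v + b Φ y
    have h1 : ∀ v ∈ S x, Φ (a * x + b * y) ≤ a * v + b * Φ y := by
      intro v hv
      rcases eq_or_lt_of_le hb with hb0 | hbpos
      · obtain ⟨u, hu⟩ := hne y
        have := hkey a b x y ha hb hab v hv u hu
        rw [← hb0] at this ⊢
        linarith
      · rw [hΦ y]
        have : (Φ (a * x + b * y) - a * v) / b ≤ sInf (S y) := by
          refine le_csInf (hne y) fun u hu => ?_
          rw [div_le_iff₀ hbpos]
          have := hkey a b x y ha hb hab v hv u hu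
          linarith
        rw [div_le_iff₀ hbpos] at this
        linarith
    rcases eq_or_lt_of_le ha with ha0 | hapos
    · obtain ⟨v, hv⟩ := hne x
      have := h1 v hv
      rw [← ha0] at this ⊢
      linarith
    · rw [hΦ x]
      have : (Φ (a * x + b * y) - b * Φ y) / a ≤ sInf (S x) := by
        refine le_csInf (hne x) fun v hv => ?_
        rw [div_le_iff₀ hapos]
        have := h1 v hv
        linarith
      rw [div_le_iff₀ hapos] at this
      linarith
  · intro t
    constructor
    · -- lower bound
      rw [hΦ]
      refine le_csInf (hne t) ?_
      rintro v ⟨w, hw, rfl⟩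
      -- find a coordinate with |w j| ≥ |t| / ℓ
      obtain ⟨j, hj⟩ : ∃ j : Fin ℓ, |t| / (ℓ : ℝ) ≤ |w j| := by
        by_contra hcon
        push_neg at hcon
        have hlt : ∑ i : Fin ℓ, |w i| < ∑ _i : Fin ℓ, |t| / (ℓ : ℝ) :=
          Finset.sum_lt_sum_of_nonempty Finset.univ_nonempty fun i _ => hcon i
        have hsum : ∑ _i : Fin ℓ, |t| / (ℓ : ℝ) = |t| := by
          rw [Finset.sum_const, Finset.card_univ, Fintype.card_fin, nsmul_eq_mul]
          field_simp
        have habs : |t| ≤ ∑ i, |w i| := hw ▸ Finset.abs_sum_le_sum_abs _ _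
        rw [hsum] at hlt
        linarith
      have hℓR : (0:ℝ) < (ℓ : ℝ) := by exact_mod_cast hℓ0
      have step1 : (⨅ i, |t| ^ p i / ((ℓ : ℝ) ^ p i * d ^ (s i * p i)))
          ≤ |t| ^ p j / ((ℓ : ℝ) ^ p j * d ^ (s j * p j)) :=
        ciInf_le ((Set.finite_range _).bddBelow) j
      refine step1.trans ?_
      have heq : |t| ^ p j / ((ℓ : ℝ) ^ p j * d ^ (s j * p j))
          = (|t| / (ℓ : ℝ)) ^ p j / d ^ (s j * p j) := by
        rw [Real.div_rpow (abs_nonneg t) hℓR.le, div_div]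
      rw [heq]
      have step2 : (|t| / (ℓ : ℝ)) ^ p j / d ^ (s j * p j)
          ≤ |w j| ^ p j / d ^ (s j * p j) := by
        exact (div_le_div_iff_of_pos_right (hD j)).2
          (Real.rpow_le_rpow (div_nonneg (abs_nonneg t) hℓR.le) hj (hpi0 j))
      refine step2.trans ?_
      exact Finset.single_le_sum (fun i _ => hfnn i (w i)) (Finset.mem_univ j)
    · -- upper bound
      refine le_ciInf fun i => ?_
      rw [hΦ]
      exact csInf_le (hbdd t) (hmemS t i)
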